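/- Let F be a nonarchimedean complete field extension of Q_p with absolute value |·| normalized so |p| = p^(−1), let M be a free module of finite rank over the ring of power series in (x − x₀) converging on the closed unit disc with integral coefficients, and let ∇ = d/dx − A be a connection with A having integral coefficients (i.e. a model over O). If (d/dx − A)^p maps the integral model M into p·M, then for every m₀ in M the formal horizontal section m = ∑_{i≥0} (−1)^i ∇(d/dx)^i(m₀) (x−x₀)^i / i! converges on the open disc of radius p^(−1/(p(p−1))) around x₀. -/

import Mathlib

open Filter Real

section Aux

variable (p : ℕ) (hp : p.Prime) {F : Type*} [NontriviallyNormedField F]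
    (hpF : ‖(p : F)‖ = (p : ℝ)⁻¹)

include hp hpF

lemma aux_charZero : CharZero F := by
  have hp1 : (1:ℝ) < p := by exact_mod_cast hp.one_lt
  rcases CharP.char_is_prime_or_zero F (ringChar F) with hl | h0
  · exfalso
    haveI : Fact (ringChar F).Prime := ⟨hl⟩
    have hmod : p ^ ringChar F ≡ p [MOD ringChar F] := by
      rw [Nat.ModEq]
      have : ((p ^ ringChar F : ℕ) : ZMod (ringChar F)) = ((p : ℕ) : ZMod (ringChar F)) := by
        push_cast
        exact ZMod.pow_card _
      exact (ZMod.natCast_eq_natCast_iff _ _ _).mp this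
    have hcast : ((p ^ ringChar F : ℕ) : F) = ((p : ℕ) : F) :=
      CharP.natCast_eq_natCast' F (ringChar F) hmod
    have hnorm : ‖(p : F)‖ ^ ringChar F = ‖(p : F)‖ := by
      rw [← norm_pow]
      push_cast at hcast
      rw [hcast]
    rw [hpF] at hnorm
    have h01 : (0:ℝ) < (p:ℝ)⁻¹ := by positivity
    have h11 : (p:ℝ)⁻¹ < 1 := by
      rw [inv_lt_one_iff₀]; right; exact hp1
    have := pow_lt_pow_right_of_lt_one₀ h01 h11 hl.one_lt
    rw [pow_one, hnorm] at this
    exact lt_irrefl _ this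
  · haveI : CharP F 0 := h0 ▸ (inferInstance : CharP F (ringChar F))
    exact CharP.charP_to_charZero F

lemma aux_nat_bdd : ∀ n : ℕ, ‖(n : F)‖ ≤ 1 := by
  haveI : CharZero F := aux_charZero p hp hpF
  let f : MulRingNorm ℚ :=
    { toFun := fun q : ℚ => ‖(q : F)‖
      map_zero' := by simp
      add_le' := fun q s => by push_cast; exact norm_add_le _ _
      neg' := fun q => by push_cast; exact norm_neg _
      eq_zero_of_map_eq_zero' := fun q hq => by
        have : (q : F) = 0 := norm_eq_zero.mp hq
        exact_mod_cast this
      map_one' := by simp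
      map_mul' := fun q s => by push_cast; exact norm_mul _ _ }
  have hfval : ∀ q : ℚ, f q = ‖(q : F)‖ := fun q => rfl
  by_contra hbd
  have hnot : ¬ ∀ n : ℕ, f n ≤ 1 := fun h => hbd (fun n => by
    have := h n; rw [hfval] at this; simpa using this)
  have : 1 < f p := Rat.AbsoluteValue.one_lt_of_not_bounded (f := MulRingNorm.mulRingNormEquivAbsoluteValue f) hnot hp.one_lt
  have hfp : f p = (p:ℝ)⁻¹ := by rw [hfval]; simpa using hpF
  rw [hfp] at this
  have hp1 : (1:ℝ) < p := by exact_mod_cast hp.one_lt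
  have h11 : (p:ℝ)⁻¹ < 1 := by rw [inv_lt_one_iff₀]; right; exact hp1
  linarith

lemma aux_int_bdd : ∀ a : ℤ, ‖(a : F)‖ ≤ 1 := by
  intro a
  rcases Int.natAbs_eq a with h | h
  · rw [h, Int.cast_natCast]; exact aux_nat_bdd p hp hpF _
  · rw [h, Int.cast_neg, Int.cast_natCast, norm_neg]; exact aux_nat_bdd p hp hpF _

lemma aux_coprime_norm_one {n : ℕ} (hn : ¬ p ∣ n) : ‖(n : F)‖ = 1 := by
  have hp1 : (1:ℝ) < p := by exact_mod_cast hp.one_lt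
  refine le_antisymm (aux_nat_bdd p hp hpF n) ?_
  by_contra hlt
  push_neg at hlt
  obtain ⟨k, hk⟩ := exists_pow_lt_of_lt_one (by linarith : (0:ℝ) < 1 - ‖(n : F)‖)
    (by rw [inv_lt_one_iff₀]; right; exact hp1 : (p:ℝ)⁻¹ < 1)
  have hcop : IsCoprime ((p : ℤ) ^ k) (n : ℤ) := by
    apply IsCoprime.pow_left
    exact Int.isCoprime_iff_gcd_eq_one.mpr (by
      simpa [Int.gcd_natCast_natCast] using (hp.coprime_iff_not_dvd.mpr hn))
  obtain ⟨a, b, hab⟩ := hcop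
  have h1 : (1 : F) = a * (p:F) ^ k + b * (n:F) := by
    have := congrArg (fun z : ℤ => (z : F)) hab
    push_cast at this
    simpa using this.symm
  have : (1:ℝ) ≤ ‖(n : F)‖ + ((p:ℝ)⁻¹) ^ k := by
    calc (1:ℝ) = ‖(1 : F)‖ := (norm_one).symm
      _ = ‖a * (p:F) ^ k + b * (n:F)‖ := by rw [h1]
      _ ≤ ‖(a:F)‖ * ‖(p:F)‖ ^ k + ‖(b:F)‖ * ‖(n:F)‖ := by
          refine (norm_add_le _ _).trans ?_
          gcongr <;> simp [norm_mul, norm_pow]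
      _ ≤ 1 * ((p:ℝ)⁻¹) ^ k + 1 * ‖(n:F)‖ := by
          rw [hpF]
          gcongr
          · exact aux_int_bdd p hp hpF a
          · exact aux_int_bdd p hp hpF b
      _ = ‖(n : F)‖ + ((p:ℝ)⁻¹) ^ k := by ring
  linarith

lemma aux_factorial_norm (i : ℕ) :
    ‖((i.factorial : F))‖ = ((p:ℝ)⁻¹) ^ (padicValNat p i.factorial) := by
  haveI : Fact p.Prime := ⟨hp⟩
  set v := padicValNat p i.factorial with hv
  have hvf : v = i.factorial.factorization p := (Nat.factorization_def _ hp).symm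
  have hsplit : p ^ v * (i.factorial / p ^ v) = i.factorial := by
    rw [hvf]
    exact Nat.ordProj_mul_ordCompl_eq_self i.factorial p
  have hnd : ¬ p ∣ (i.factorial / p ^ v) := by
    rw [hvf]
    exact Nat.not_dvd_ordCompl hp i.factorial_ne_zero
  calc ‖((i.factorial : F))‖ = ‖((p ^ v * (i.factorial / p ^ v) : ℕ) : F)‖ := by rw [hsplit]
    _ = ‖(p:F)‖ ^ v * ‖(((i.factorial / p ^ v : ℕ)) : F)‖ := by
        push_cast; rw [norm_mul, norm_pow]
    _ = ((p:ℝ)⁻¹) ^ v := by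
        rw [hpF, aux_coprime_norm_one p hp hpF hnd, mul_one]

end Aux

lemma aux_pow_bound {F : Type*} [NontriviallyNormedField F] {M : Type*} [NormedAddCommGroup M]
    [NormedSpace F M] (p : ℕ) (hp : 0 < p) (T : M →ₗ[F] M)
    (hT1 : ∀ m : M, ‖m‖ ≤ 1 → ‖T m‖ ≤ 1)
    (hTp : ∀ m : M, ‖m‖ ≤ 1 → ∃ m' : M, ‖m'‖ ≤ 1 ∧ (T ^ p) m = (p : F) • m') :
    ∀ i : ℕ, ∀ m : M, ‖m‖ ≤ 1 → ∃ m' : M, ‖m'‖ ≤ 1 ∧ (T ^ i) m = ((p : F) ^ (i / p)) • m' := by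
  have hiter : ∀ j : ℕ, ∀ m : M, ‖m‖ ≤ 1 → ‖(T ^ j) m‖ ≤ 1 := by
    intro j
    induction j with
    | zero => intro m hm; simpa using hm
    | succ j ih =>
      intro m hm
      rw [pow_succ, Module.End.mul_apply]
      exact ih _ (hT1 m hm)
  intro i
  induction i using Nat.strong_induction_on with
  | _ i IH =>
    intro m hm
    by_cases h : i < p
    · refine ⟨(T ^ i) m, hiter i m hm, ?_⟩
      rw [Nat.div_eq_of_lt h, pow_zero, one_smul]
    · push_neg at h
      obtain ⟨m₁, hm₁, hm₁eq⟩ := hTp m hm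
      obtain ⟨m₂, hm₂, hm₂eq⟩ := IH (i - p) (by omega) m₁ hm₁
      refine ⟨m₂, hm₂, ?_⟩
      have hsplit : (T ^ i) m = (T ^ (i - p)) ((T ^ p) m) := by
        rw [← Module.End.mul_apply, ← pow_add]
        congr 2
        omega
      rw [hsplit, hm₁eq, map_smul, hm₂eq, smul_smul, ← pow_succ',
        Nat.div_eq_sub_div hp h]

/-- Let `F` be a complete nonarchimedean field with `‖p‖ = p⁻¹`, `M` a normed module over `F`
with an integral structure given by its unit ball, and `T = ∇(d/dx)` an `F`-linear operator
preserving the unit ball (the integral model) and such that `T^p` maps the unit ball into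
`p` times the unit ball (vanishing `p`-curvature).  Then for every `m₀` in the unit ball, the
formal horizontal section `∑ (−1)^i T^i(m₀) (x−x₀)^i / i!` converges on the open disc of radius
`p^(−1/(p(p−1)))`: its coefficients `c_i` satisfy `‖c_i‖ r^i → 0` for all `r` below that radius. -/
theorem stmt_8 (p : ℕ) (hp : p.Prime) {F : Type*} [NontriviallyNormedField F]
    (hpF : ‖(p : F)‖ = (p : ℝ)⁻¹)
    {M : Type*} [NormedAddCommGroup M] [NormedSpace F M]
    (T : M →ₗ[F] M)
    (hT1 : ∀ m : M, ‖m‖ ≤ 1 → ‖T m‖ ≤ 1)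
    (hTp : ∀ m : M, ‖m‖ ≤ 1 → ∃ m' : M, ‖m'‖ ≤ 1 ∧ (T ^ p) m = (p : F) • m')
    (m₀ : M) (hm₀ : ‖m₀‖ ≤ 1) :
    ∀ r : ℝ, 0 < r → r < (p : ℝ) ^ (-(1 : ℝ) / (p * (p - 1))) →
      Tendsto (fun i : ℕ => ‖(T ^ i) m₀‖ * ‖((i.factorial : F))‖⁻¹ * r ^ i)
        atTop (nhds 0) := by
  intro r hr0 hrlt
  haveI : Fact p.Prime := ⟨hp⟩
  have hp1R : (1:ℝ) < p := by exact_mod_cast hp.one_lt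
  have hp0R : (0:ℝ) < p := by linarith
  have hpne : (p:ℝ) ≠ 0 := ne_of_gt hp0R
  have hp1ne : (p:ℝ) - 1 ≠ 0 := by
    have h2 : (2:ℝ) ≤ p := by exact_mod_cast hp.two_le
    intro h; linarith
  set c : ℝ := 1 / (p * ((p:ℝ) - 1)) with hc
  have hc0 : 0 < c := by
    apply div_pos one_pos
    apply mul_pos hp0R
    have h2 : (2:ℝ) ≤ p := by exact_mod_cast hp.two_le
    linarith
  set q : ℝ := (p:ℝ) ^ c * r with hq
  have hq0 : 0 ≤ q := by positivity
  have hq1 : q < 1 := by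
    have h1 := mul_lt_mul_of_pos_left hrlt (rpow_pos_of_pos hp0R c)
    calc q < (p:ℝ)^c * (p:ℝ)^(-(1:ℝ)/((p:ℝ)*((p:ℝ)-1))) := h1
      _ = (p:ℝ) ^ (c + -(1:ℝ)/((p:ℝ)*((p:ℝ)-1))) := (rpow_add hp0R _ _).symm
      _ = 1 := by
        rw [hc]
        ring_nf
        exact rpow_zero _
  have hbound : ∀ i : ℕ, ‖(T ^ i) m₀‖ * ‖((i.factorial : F))‖⁻¹ * r ^ i ≤ (p:ℝ) * q ^ i := by
    intro i
    set v : ℕ := padicValNat p i.factorial with hv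
    -- norm of T^i m₀
    obtain ⟨m', hm', hm'eq⟩ := aux_pow_bound p hp.pos T hT1 hTp i m₀ hm₀
    have hTi : ‖(T ^ i) m₀‖ ≤ ((p:ℝ)⁻¹) ^ (i / p) := by
      rw [hm'eq, norm_smul, norm_pow, hpF]
      calc ((p:ℝ)⁻¹) ^ (i/p) * ‖m'‖ ≤ ((p:ℝ)⁻¹) ^ (i/p) * 1 := by
            apply mul_le_mul_of_nonneg_left hm' (by positivity)
        _ = ((p:ℝ)⁻¹) ^ (i/p) := mul_one _
    have hfact : ‖((i.factorial : F))‖⁻¹ = (p:ℝ) ^ v := by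
      rw [aux_factorial_norm p hp hpF i, ← hv, inv_pow, inv_inv]
    -- exponent bounds
    have hvle : ((v:ℝ)) ≤ (i:ℝ) / ((p:ℝ) - 1) := by
      have h1 : (p - 1) * v ≤ i := by
        rw [hv, sub_one_mul_padicValNat_factorial]
        exact Nat.sub_le _ _
      have h1R : ((p:ℝ) - 1) * (v:ℝ) ≤ (i:ℝ) := by
        have : (((p-1) * v : ℕ) : ℝ) ≤ (i:ℝ) := by exact_mod_cast h1
        rwa [Nat.cast_mul, Nat.cast_sub hp.one_le, Nat.cast_one] at this
      rw [le_div_iff₀ (by cases' (lt_or_gt_of_ne hp1ne) with h h <;> [linarith [hp1R]; linarith])]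
      linarith
    have hdivlow : (i:ℝ) / (p:ℝ) - 1 < ((i / p : ℕ) : ℝ) := by
      have h1 : p * (i / p) + i % p = i := Nat.div_add_mod i p
      have h2 : i % p < p := Nat.mod_lt i hp.pos
      have h1R : (p:ℝ) * ((i/p:ℕ):ℝ) + ((i % p : ℕ):ℝ) = (i:ℝ) := by exact_mod_cast h1
      have h2R : ((i % p : ℕ):ℝ) < (p:ℝ) := by exact_mod_cast h2
      rw [div_sub_one hpne, div_lt_iff₀ hp0R]
      linarith
    have hexp : 1 - (i:ℝ)/(p:ℝ) + (i:ℝ)/((p:ℝ)-1) = 1 + c * i := by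
      rw [hc]
      field_simp
      ring
    have key : ((p:ℝ)⁻¹) ^ (i / p) * (p:ℝ) ^ v ≤ (p:ℝ) * ((p:ℝ)^c)^i := by
      have lhs_eq : ((p:ℝ)⁻¹) ^ (i / p) * (p:ℝ) ^ v
          = (p:ℝ) ^ (-(((i/p : ℕ):ℝ)) + (v:ℝ)) := by
        rw [rpow_add hp0R, rpow_neg hp0R.le, rpow_natCast, rpow_natCast, inv_pow]
      have rhs_eq : (p:ℝ) * ((p:ℝ)^c)^i = (p:ℝ) ^ ((1:ℝ) + c * i) := by
        rw [rpow_add hp0R, rpow_one, ← rpow_natCast ((p:ℝ)^c) i, ← rpow_mul hp0R.le]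
      rw [lhs_eq, rhs_eq]
      apply rpow_le_rpow_of_exponent_le hp1R.le
      linarith
    calc ‖(T ^ i) m₀‖ * ‖((i.factorial : F))‖⁻¹ * r ^ i
        ≤ ((p:ℝ)⁻¹) ^ (i / p) * (p:ℝ) ^ v * r ^ i := by
          rw [hfact]
          apply mul_le_mul_of_nonneg_right _ (by positivity)
          apply mul_le_mul_of_nonneg_right hTi (by positivity)
      _ ≤ ((p:ℝ) * ((p:ℝ)^c)^i) * r ^ i := by
          apply mul_le_mul_of_nonneg_right key (by positivity)
      _ = (p:ℝ) * q ^ i := by rw [hq, mul_pow]; ring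
  refine squeeze_zero (fun i => by positivity) hbound ?_
  have h0 := tendsto_pow_atTop_nhds_zero_of_lt_one hq0 hq1
  simpa using h0.const_mul (p:ℝ)
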